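/- For the pre Lie superalgebra of polynomial multivector fields on R^n with double weight (w,h) = (degree shift, polynomial-degree shift), the Euler characteristic of the double-weighted chain complex {C_m^{(0,h)}} (first weight w = 0) is 0 for every integer h. Concretely: with d_t = dim X^1_{t-1}(R^n) = n·C(n-1+t-1, n-1), Σ_{m≥0} (-1)^m Σ_{(ℓ_t): Σℓ_t = m, Σ t·ℓ_t = 2m+h} Π_t C(d_t, ℓ_t) = 0, where for h = 0 the m = 0 term contributes 1 (empty product) and for h ≠ 0 the sum is over m ≥ max(1,-h). -/
import Mathlib

open Finset Finsupp

namespace EulerAux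

/-- `d t = n·C(n+t-2, n-1)`. -/
def dd (n t : ℕ) : ℕ := n * Nat.choose (n + t - 2) (n - 1)

/-- The summand. -/
def ff (n : ℕ) (ℓ : ℕ →₀ ℕ) : ℤ :=
  (-1 : ℤ) ^ (∑ t ∈ ℓ.support, ℓ t)
    * ∏ t ∈ ℓ.support, (Nat.choose (dd n t) (ℓ t) : ℤ)

/-- The weight-(0,h) condition. -/
def PP (h : ℤ) (ℓ : ℕ →₀ ℕ) : Prop := ℓ 0 = 0 ∧
  (∑ t ∈ ℓ.support, (t : ℤ) * ℓ t) = 2 * (∑ t ∈ ℓ.support, (ℓ t : ℤ)) + h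

lemma disj (q : ℕ →₀ ℕ) (hq : q 2 = 0) (k : ℕ) :
    Disjoint q.support (Finsupp.single (2 : ℕ) k).support := by
  refine Finset.disjoint_left.2 fun a ha hb => ?_
  have := Finsupp.support_single_subset hb
  simp only [Finset.mem_singleton] at this
  subst this
  exact (Finsupp.mem_support_iff.1 ha) hq

lemma sum_vals (q : ℕ →₀ ℕ) (hq : q 2 = 0) (k : ℕ) :
    (∑ t ∈ (q + Finsupp.single (2 : ℕ) k).support, (q + Finsupp.single (2 : ℕ) k) t)
      = (∑ t ∈ q.support, q t) + k := by
  have h2 : (Finsupp.single (2 : ℕ) k).sum (fun (_ : ℕ) (x : ℕ) => x) = k :=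
    Finsupp.sum_single_index rfl
  calc (∑ t ∈ (q + Finsupp.single (2 : ℕ) k).support, (q + Finsupp.single (2 : ℕ) k) t)
      = (q + Finsupp.single (2 : ℕ) k).sum (fun _ x => x) := rfl
    _ = q.sum (fun _ x => x) + (Finsupp.single (2 : ℕ) k).sum (fun (_ : ℕ) (x : ℕ) => x) :=
        Finsupp.sum_add_index_of_disjoint (disj q hq k) _
    _ = (∑ t ∈ q.support, q t) + k := by rw [h2]; rfl

lemma sum_wt (q : ℕ →₀ ℕ) (hq : q 2 = 0) (k : ℕ) :
    (∑ t ∈ (q + Finsupp.single (2 : ℕ) k).support,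
        (t : ℤ) * ((q + Finsupp.single (2 : ℕ) k) t : ℤ))
      = (∑ t ∈ q.support, (t : ℤ) * (q t : ℤ)) + 2 * k := by
  have h2 : (Finsupp.single (2 : ℕ) k).sum (fun (t : ℕ) (x : ℕ) => (t : ℤ) * (x : ℤ))
      = 2 * (k : ℤ) := by
    rw [Finsupp.sum_single_index (by simp)]
    push_cast
    ring
  calc (∑ t ∈ (q + Finsupp.single (2 : ℕ) k).support,
        (t : ℤ) * ((q + Finsupp.single (2 : ℕ) k) t : ℤ))
      = (q + Finsupp.single (2 : ℕ) k).sum (fun (t : ℕ) (x : ℕ) => (t : ℤ) * (x : ℤ)) := rfl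
    _ = q.sum (fun (t : ℕ) (x : ℕ) => (t : ℤ) * (x : ℤ))
        + (Finsupp.single (2 : ℕ) k).sum (fun (t : ℕ) (x : ℕ) => (t : ℤ) * (x : ℤ)) :=
        Finsupp.sum_add_index_of_disjoint (disj q hq k) _
    _ = (∑ t ∈ q.support, (t : ℤ) * (q t : ℤ)) + 2 * k := by rw [h2]; rfl

lemma ff_add (n : ℕ) (q : ℕ →₀ ℕ) (hq : q 2 = 0) (k : ℕ) :
    ff n (q + Finsupp.single (2 : ℕ) k)
      = ((-1 : ℤ) ^ k * (Nat.choose (dd n 2) k : ℤ)) * ff n q := by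
  have h2 : (Finsupp.single (2 : ℕ) k).prod (fun (t : ℕ) (x : ℕ) => (Nat.choose (dd n t) x : ℤ))
      = (Nat.choose (dd n 2) k : ℤ) :=
    Finsupp.prod_single_index (by simp)
  have hs := sum_vals q hq k
  unfold ff
  rw [hs]
  have hpr : (∏ t ∈ (q + Finsupp.single (2 : ℕ) k).support,
      (Nat.choose (dd n t) ((q + Finsupp.single (2 : ℕ) k) t) : ℤ))
      = (∏ t ∈ q.support, (Nat.choose (dd n t) (q t) : ℤ)) * (Nat.choose (dd n 2) k : ℤ) := by
    calc (∏ t ∈ (q + Finsupp.single (2 : ℕ) k).support,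
        (Nat.choose (dd n t) ((q + Finsupp.single (2 : ℕ) k) t) : ℤ))
        = (q + Finsupp.single (2 : ℕ) k).prod
            (fun (t : ℕ) (x : ℕ) => (Nat.choose (dd n t) x : ℤ)) := rfl
      _ = q.prod (fun (t : ℕ) (x : ℕ) => (Nat.choose (dd n t) x : ℤ))
          * (Finsupp.single (2 : ℕ) k).prod
              (fun (t : ℕ) (x : ℕ) => (Nat.choose (dd n t) x : ℤ)) :=
          Finsupp.prod_add_index_of_disjoint (disj q hq k) _
      _ = _ := by rw [h2]; rfl
  rw [hpr, pow_add]
  ring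

lemma main (n : ℕ) (hn : 1 ≤ n) (h : ℤ) :
    ∑ᶠ ℓ : {ℓ : ℕ →₀ ℕ // PP h ℓ}, ff n ℓ.1 = 0 := by
  classical
  set N : ℕ := h.toNat + n + 3 with hN
  set B : ℕ →₀ ℕ := Finsupp.indicator (Finset.range N) (fun t _ => dd n t) with hB
  have hd1 : dd n 1 = n := by
    simp [dd, show n + 1 - 2 = n - 1 by omega]
  have hd2ne : dd n 2 ≠ 0 := by
    have h2 : n + 2 - 2 = n := by omega
    have := Nat.choose_pos (show n - 1 ≤ n by omega)
    simp [dd, h2]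
    omega
  have hB2 : B 2 = dd n 2 := by
    rw [hB, Finsupp.indicator_of_mem (Finset.mem_range.2 (by omega))]
  have step1 : (∑ᶠ ℓ : {ℓ : ℕ →₀ ℕ // PP h ℓ}, ff n ℓ.1)
      = ∑ ℓ ∈ (Finset.Iic B).filter (PP h), ff n ℓ := by
    rw [finsum_subtype_eq_finsum_cond]
    refine finsum_cond_eq_sum_of_cond_iff (ff n) ?_
    intro ℓ hℓ
    constructor
    · intro hPℓ
      refine Finset.mem_filter.2 ⟨Finset.mem_Iic.2 ?_, hPℓ⟩
      have hbdd : ∀ t ∈ ℓ.support, ℓ t ≤ dd n t := by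
        intro t ht
        by_contra hlt
        push_neg at hlt
        have hz : (Nat.choose (dd n t) (ℓ t) : ℤ) = 0 := by
          rw [Nat.choose_eq_zero_of_lt hlt]
          rfl
        apply hℓ
        unfold ff
        rw [Finset.prod_eq_zero ht hz, mul_zero]
      have hsupp : ∀ s ∈ ℓ.support, s < N := by
        intro s hs
        by_contra hsN
        push_neg at hsN
        have hconstr : (∑ t ∈ ℓ.support, ((t : ℤ) - 2) * (ℓ t : ℤ)) = h := by
          have h0 := hPℓ.2
          rw [Finset.sum_congr rfl (fun t _ => by ring :
            ∀ t ∈ ℓ.support, ((t : ℤ) - 2) * (ℓ t : ℤ) = (t : ℤ) * ℓ t - 2 * (ℓ t : ℤ))]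
          rw [Finset.sum_sub_distrib, h0, ← Finset.mul_sum]
          ring
        have hs1 : s ≠ 1 := by omega
        have h1le : (ℓ 1 : ℤ) ≤ n := by
          by_cases h1 : 1 ∈ ℓ.support
          · exact_mod_cast (hbdd 1 h1).trans_eq hd1
          · rw [Finsupp.notMem_support_iff.1 h1]
            exact_mod_cast Nat.zero_le n
        rw [← Finset.sum_filter_add_sum_filter_not ℓ.support (fun t => t = 1)] at hconstr
        have hA : -(n : ℤ) ≤ (∑ t ∈ ℓ.support.filter (fun t => t = 1),
            ((t : ℤ) - 2) * (ℓ t : ℤ)) := by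
          by_cases h1 : 1 ∈ ℓ.support
          · rw [Finset.filter_eq' ℓ.support 1, if_pos h1, Finset.sum_singleton]
            push_cast
            nlinarith [h1le, Nat.cast_nonneg (α := ℤ) (ℓ 1)]
          · rw [Finset.filter_eq' ℓ.support 1, if_neg h1, Finset.sum_empty]
            omega
        have hBt : (s : ℤ) - 2 ≤ (∑ t ∈ ℓ.support.filter (fun t => ¬ t = 1),
            ((t : ℤ) - 2) * (ℓ t : ℤ)) := by
          have hsmem : s ∈ ℓ.support.filter (fun t => ¬ t = 1) :=
            Finset.mem_filter.2 ⟨hs, hs1⟩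
          have hone : (1 : ℤ) ≤ (ℓ s : ℤ) := by
            have := Finsupp.mem_support_iff.1 hs
            omega
          have hs2 : (2 : ℤ) ≤ (s : ℤ) := by
            have := hPℓ.1
            omega
          calc (s : ℤ) - 2 ≤ ((s : ℤ) - 2) * (ℓ s : ℤ) := by nlinarith
            _ ≤ _ := by
                refine Finset.single_le_sum
                  (f := fun t : ℕ => ((t : ℤ) - 2) * (ℓ t : ℤ)) (fun t ht => ?_) hsmem
                have ht' := Finset.mem_filter.1 ht
                have ht0 : t ≠ 0 := by
                  intro h0
                  rw [h0] at ht'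
                  exact Finsupp.mem_support_iff.1 ht'.1 hPℓ.1
                have ht2 : (2 : ℤ) ≤ (t : ℤ) := by
                  have : t ≠ 1 := ht'.2
                  omega
                show (0 : ℤ) ≤ ((t : ℤ) - 2) * (ℓ t : ℤ)
                have := Nat.cast_nonneg (α := ℤ) (ℓ t)
                nlinarith
        omega
      rw [Finsupp.le_iff]
      intro t ht
      have htN := hsupp t ht
      rw [hB, Finsupp.indicator_of_mem (Finset.mem_range.2 htN)]
      exact hbdd t ht
    · intro hmem
      exact (Finset.mem_filter.1 hmem).2
  rw [step1]
  have hmain : (∑ ℓ ∈ (Finset.Iic B).filter (PP h), ff n ℓ)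
      = ∑ p ∈ ((Finset.Iic B).filter (fun q => PP h q ∧ q 2 = 0))
            ×ˢ Finset.range (dd n 2 + 1),
          ((-1 : ℤ) ^ p.2 * (Nat.choose (dd n 2) p.2 : ℤ)) * ff n p.1 := by
    refine Finset.sum_nbij' (fun ℓ => (ℓ.erase 2, ℓ 2))
      (fun p => p.1 + Finsupp.single (2 : ℕ) p.2) ?_ ?_ ?_ ?_ ?_
    · intro ℓ hℓ
      obtain ⟨hle, hPℓ⟩ := Finset.mem_filter.1 hℓ
      rw [Finset.mem_Iic] at hle
      have hval : ∀ t, (ℓ.erase 2) t ≤ ℓ t := by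
        intro t
        by_cases h2 : t = 2 <;> simp [Finsupp.erase_apply, h2]
      have herle : ℓ.erase 2 ≤ B := fun t => (hval t).trans (hle t)
      have hq2 : (ℓ.erase 2) 2 = 0 := Finsupp.erase_same
      have hdecomp : ℓ.erase 2 + Finsupp.single (2 : ℕ) (ℓ 2) = ℓ :=
        Finsupp.erase_add_single 2 ℓ
      refine Finset.mem_product.2 ⟨Finset.mem_filter.2 ⟨Finset.mem_Iic.2 herle,
        ⟨?_, ?_⟩, hq2⟩, Finset.mem_range.2 ?_⟩
      · rw [Finsupp.erase_apply]
        simp [hPℓ.1]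
      · have hwt := sum_wt (ℓ.erase 2) hq2 (ℓ 2)
        have hvl := sum_vals (ℓ.erase 2) hq2 (ℓ 2)
        rw [hdecomp] at hwt hvl
        have hc := hPℓ.2
        rw [hwt] at hc
        have hvl' : (∑ t ∈ ℓ.support, (ℓ t : ℤ))
            = (∑ t ∈ (ℓ.erase 2).support, ((ℓ.erase 2) t : ℤ)) + (ℓ 2 : ℤ) := by
          have := congrArg (fun m : ℕ => (m : ℤ)) hvl
          push_cast at this
          exact this
        rw [hvl'] at hc
        linarith
      · show ℓ 2 < dd n 2 + 1
        have := hle 2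
        rw [hB2] at this
        omega
    · intro p hp
      obtain ⟨hp1, hp2⟩ := Finset.mem_product.1 hp
      obtain ⟨hle, ⟨hPq, hq2⟩⟩ := Finset.mem_filter.1 hp1
      rw [Finset.mem_Iic] at hle
      rw [Finset.mem_range] at hp2
      refine Finset.mem_filter.2 ⟨Finset.mem_Iic.2 fun t => ?_, ?_, ?_⟩
      · by_cases h2t : t = 2
        · subst h2t
          simp only [Finsupp.add_apply, hq2, Finsupp.single_eq_same, hB2, zero_add]
          omega
        · simp [Finsupp.single_apply, (show ¬ (2 : ℕ) = t by omega), hle t]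
      · have := hPq.1
        simp [this, Finsupp.single_apply]
      · have hwt := sum_wt p.1 hq2 p.2
        have hvl := sum_vals p.1 hq2 p.2
        rw [hwt]
        have hvl' : (∑ t ∈ (p.1 + Finsupp.single (2 : ℕ) p.2).support,
            ((p.1 + Finsupp.single (2 : ℕ) p.2) t : ℤ))
            = (∑ t ∈ p.1.support, (p.1 t : ℤ)) + (p.2 : ℤ) := by
          have := congrArg (fun m : ℕ => (m : ℤ)) hvl
          push_cast at this
          exact this
        rw [hvl']
        have hc := hPq.2
        linarith
    · intro ℓ hℓ
      exact Finsupp.erase_add_single 2 ℓ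
    · intro p hp
      obtain ⟨hp1, _⟩ := Finset.mem_product.1 hp
      obtain ⟨_, ⟨_, hq2⟩⟩ := Finset.mem_filter.1 hp1
      have he : (p.1 + Finsupp.single (2 : ℕ) p.2).erase 2 = p.1 := by
        rw [Finsupp.erase_add, Finsupp.erase_single,
          Finsupp.erase_of_notMem_support (by simp [Finsupp.mem_support_iff, hq2]),
          add_zero]
      have hv : (p.1 + Finsupp.single (2 : ℕ) p.2) 2 = p.2 := by
        simp [hq2]
      rw [Prod.ext_iff]
      exact ⟨he, hv⟩
    · intro ℓ hℓ
      have hq2 : (ℓ.erase 2) 2 = 0 := Finsupp.erase_same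
      have := ff_add n (ℓ.erase 2) hq2 (ℓ 2)
      rw [Finsupp.erase_add_single 2 ℓ] at this
      simpa using this
  rw [hmain, Finset.sum_product]
  refine Finset.sum_eq_zero fun q hq => ?_
  show ∑ k ∈ Finset.range (dd n 2 + 1),
      ((-1 : ℤ) ^ k * (Nat.choose (dd n 2) k : ℤ)) * ff n q = 0
  rw [← Finset.sum_mul, Int.alternating_sum_range_choose_of_ne hd2ne, zero_mul]

end EulerAux

/-- the Euler characteristic of the weight-(0,h) chain complex of the
pre Lie superalgebra of polynomial multivector fields on ℝⁿ vanishes for every h.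
With d_t = dim X¹_{t-1}(ℝⁿ) = n·C(n+t-2, n-1), the chain space of degree m = Σ ℓ_t
is ⨁ Λ^{ℓ₁}X¹₀ △ Λ^{ℓ₂}X¹₁ △ ⋯ over sequences with Σ_t t·ℓ_t = 2m + h, so
Σ_m (-1)^m dim C_m^{(0,h)}
  = Σ_{ℓ : Σ t ℓ_t = 2 Σ ℓ_t + h} (-1)^{Σ ℓ_t} Π_t C(d_t, ℓ_t) = 0
(the empty sequence accounts for the m = 0 chain when h = 0). -/
theorem euler_characteristic_weight_zero (n : ℕ) (hn : 1 ≤ n) (h : ℤ) :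
    ∑ᶠ ℓ : {ℓ : ℕ →₀ ℕ // ℓ 0 = 0 ∧
        (∑ t ∈ ℓ.support, (t : ℤ) * ℓ t) = 2 * (∑ t ∈ ℓ.support, (ℓ t : ℤ)) + h},
      ((-1 : ℤ) ^ (∑ t ∈ ℓ.1.support, ℓ.1 t)
        * ∏ t ∈ ℓ.1.support,
            (Nat.choose (n * Nat.choose (n + t - 2) (n - 1)) (ℓ.1 t) : ℤ)) = 0 :=
  EulerAux.main n hn h
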